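/- arXiv:2202.02841 — 2 statements merged into one kernel-verified Lean document; each statement's English description precedes it below -/
import Mathlib

section
/- Let {X_N}_{N≥2} be random vectors in ℝⁿ with sup_{N≥2} E[‖X_N‖_∞^m] = B_m < ∞ for some m > 2. Let U_N be the componentwise uniform quantizer with N bins of width Δ_N = 2N^{-1+2/m} per coordinate (midpoint reconstruction on [-(N/2)Δ_N, (N/2)Δ_N], overflow components map to 0), and set Y_N = X_N - U_N(X_N). Then for every positive semidefinite V ∈ ℝ^{n×n}, tr(V E[Y_N Y_Nᵀ]) = O(N^{-2+4/m}). -/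
open MeasureTheory Matrix
open scoped ENNReal

/-- The scalar modified uniform quantizer with `N` bins of width `Δ`. -/
noncomputable def uniformQuantizer (N : ℕ) (Δ : ℝ) (x : ℝ) : ℝ :=
  if |x| > (N / 2 : ℝ) * Δ then 0
  else if x = (N / 2 : ℝ) * Δ then (N / 2 : ℝ) * Δ - Δ / 2
  else Δ * ⌊x / Δ⌋ + Δ / 2

/-- The componentwise (type II) uniform vector quantizer. -/
noncomputable def vectorQuantizer (N : ℕ) (Δ : ℝ) (x : Fin n → ℝ) : Fin n → ℝ :=
  fun i => uniformQuantizer N Δ (x i)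

lemma measurable_uniformQuantizer (N : ℕ) (Δ : ℝ) : Measurable (uniformQuantizer N Δ) := by
  unfold uniformQuantizer
  apply Measurable.ite
  · exact measurableSet_lt measurable_const measurable_id.abs
  · exact measurable_const
  apply Measurable.ite
  · exact measurableSet_eq_fun measurable_id measurable_const
  · exact measurable_const
  · have h1 : Measurable fun x : ℝ => (⌊x / Δ⌋ : ℝ) :=
      measurable_from_top.comp (measurable_id.div_const Δ).floor
    exact (h1.const_mul Δ).add_const _

lemma quantizer_err_le {N : ℕ} {Δ x : ℝ} (hΔ : 0 < Δ) (hx : |x| ≤ (N / 2 : ℝ) * Δ) :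
    |x - uniformQuantizer N Δ x| ≤ Δ / 2 := by
  unfold uniformQuantizer
  rw [if_neg (not_lt.mpr hx)]
  by_cases h : x = (N / 2 : ℝ) * Δ
  · rw [if_pos h, h]
    rw [show (N / 2 : ℝ) * Δ - ((N / 2 : ℝ) * Δ - Δ / 2) = Δ / 2 by ring]
    rw [abs_of_nonneg (by linarith)]
  · rw [if_neg h]
    have h1 : (⌊x / Δ⌋ : ℝ) ≤ x / Δ := Int.floor_le _
    have h2 : x / Δ < ⌊x / Δ⌋ + 1 := Int.lt_floor_add_one _
    rw [abs_le]
    have hl : Δ * ⌊x / Δ⌋ ≤ x := by rw [mul_comm]; exact (le_div_iff₀ hΔ).mp h1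
    have hr : x < Δ * ⌊x / Δ⌋ + Δ := by
      have := (div_lt_iff₀ hΔ).mp h2; nlinarith
    constructor <;> linarith

lemma quantizer_err_overflow {N : ℕ} {Δ x : ℝ} (hx : |x| > (N / 2 : ℝ) * Δ) :
    x - uniformQuantizer N Δ x = x := by
  unfold uniformQuantizer
  rw [if_pos hx, sub_zero]

/-- If `sup_{N≥2} E[‖X_N‖_∞^m] ≤ B_m < ∞` for some `m > 2`, the bin size is
`Δ_N = 2 N^{-1+2/m}`, and `Y_N = X_N - U_N(X_N)`, then for every positive
semidefinite `V`, `tr(V E[Y_N Y_Nᵀ]) = O(N^{-2+4/m})` along even `N → ∞`. -/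
theorem vector_quantizer_high_rate_distortion {Ω : Type*} [MeasurableSpace Ω]
    (μ : Measure Ω) [IsProbabilityMeasure μ] (n : ℕ) [NeZero n]
    (X : ℕ → Ω → (Fin n → ℝ)) (hXm : ∀ N, Measurable (X N))
    (m : ℝ) (hm : 2 < m) (Bm : ℝ)
    (hB : ∀ N, 2 ≤ N →
      ∫⁻ ω, ENNReal.ofReal
        ((Finset.univ.sup' Finset.univ_nonempty fun i => |X N ω i|) ^ m) ∂μ
        ≤ ENNReal.ofReal Bm)
    (V : Matrix (Fin n) (Fin n) ℝ) (hV : V.PosSemidef) :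
    ∃ c : ℝ, 0 < c ∧ ∃ N₀ : ℕ, ∀ N, N₀ ≤ N → 2 ≤ N → Even N →
      (V * Matrix.of (fun i j =>
          ∫ ω, (X N ω i - uniformQuantizer N (2 * (N : ℝ) ^ (-1 + 2 / m)) (X N ω i)) *
               (X N ω j - uniformQuantizer N (2 * (N : ℝ) ^ (-1 + 2 / m)) (X N ω j)) ∂μ)).trace
        ≤ c * (N : ℝ) ^ (-2 + 4 / m) := by
  have hm0 : (0:ℝ) < m := by linarith
  set B : ℝ := max Bm 0 with hBdef
  have hB0 : 0 ≤ B := le_max_right _ _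
  set S : ℝ := ∑ i : Fin n, ∑ j : Fin n, |V i j| with hSdef
  have hS0 : 0 ≤ S := Finset.sum_nonneg fun i _ =>
    Finset.sum_nonneg fun j _ => abs_nonneg _
  refine ⟨(S + 1) * (1 + B), by nlinarith, 2, fun N _ hN2 _ => ?_⟩
  have hNpos : (0:ℝ) < (N:ℝ) := by positivity
  have hN2R : (2:ℝ) ≤ (N:ℝ) := by exact_mod_cast hN2
  set a : ℝ := -1 + 2/m with ha
  set p : ℝ := -2 + 4/m with hp
  set Δ : ℝ := 2 * (N:ℝ) ^ a with hΔdef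
  have hΔpos : 0 < Δ := by
    rw [hΔdef]; positivity
  have hNppos : (0:ℝ) < (N:ℝ) ^ p := Real.rpow_pos_of_pos hNpos p
  have hc₀ : ((N:ℕ):ℝ) / 2 * Δ = (N:ℝ) ^ (2/m) := by
    rw [show (2:ℝ)/m = 1 + a by rw [ha]; ring, Real.rpow_add hNpos, Real.rpow_one, hΔdef]
    ring
  have hc₀pos : 0 < ((N:ℕ):ℝ) / 2 * Δ := by rw [hc₀]; positivity
  have hK : (((N:ℕ):ℝ) / 2 * Δ) ^ (2 - m) = (N:ℝ) ^ p := by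
    rw [hc₀, ← Real.rpow_mul hNpos.le]
    congr 1
    rw [hp]; field_simp; ring
  have hΔ2 : Δ / 2 = (N:ℝ) ^ a := by rw [hΔdef]; ring
  have hNp : (N:ℝ) ^ a * (N:ℝ) ^ a = (N:ℝ) ^ p := by
    rw [← Real.rpow_add hNpos]
    congr 1
    rw [ha, hp]; ring
  -- the sup-norm
  set M : Ω → ℝ := fun ω => Finset.univ.sup' Finset.univ_nonempty fun i => |X N ω i|
    with hMdef
  have i0 : Fin n := ⟨0, Nat.pos_of_ne_zero (NeZero.ne n)⟩
  have hMle : ∀ ω i, |X N ω i| ≤ M ω := fun ω i =>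
    Finset.le_sup' (fun i => |X N ω i|) (Finset.mem_univ i)
  have hM0 : ∀ ω, 0 ≤ M ω := fun ω => le_trans (abs_nonneg _) (hMle ω i0)
  have hMmeas : Measurable M := by
    have : M = Finset.univ.sup' Finset.univ_nonempty (fun i ω => |X N ω i|) := by
      ext ω; rw [Finset.sup'_apply]
    rw [this]
    exact Finset.measurable_sup' Finset.univ_nonempty fun i _ => ((hXm N).eval).abs
  have hMm_nonneg : ∀ ω, 0 ≤ M ω ^ m := fun ω => Real.rpow_nonneg (hM0 ω) m
  have hMmMeas : Measurable fun ω => M ω ^ m :=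
    (Real.continuous_rpow_const hm0.le).measurable.comp hMmeas
  have hIntMm : Integrable (fun ω => M ω ^ m) μ := by
    refine ⟨hMmMeas.aestronglyMeasurable, ?_⟩
    rw [hasFiniteIntegral_iff_ofReal (ae_of_all _ hMm_nonneg)]
    exact lt_of_le_of_lt (hB N hN2) ENNReal.ofReal_lt_top
  have hIntMmB : ∫ ω, M ω ^ m ∂μ ≤ B := by
    rw [integral_eq_lintegral_of_nonneg_ae (ae_of_all _ hMm_nonneg)
      hMmMeas.aestronglyMeasurable]
    calc (∫⁻ ω, ENNReal.ofReal (M ω ^ m) ∂μ).toReal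
        ≤ (ENNReal.ofReal B).toReal := by
          apply ENNReal.toReal_mono ENNReal.ofReal_ne_top
          exact le_trans (hB N hN2) (ENNReal.ofReal_le_ofReal (le_max_left _ _))
      _ = B := ENNReal.toReal_ofReal hB0
  -- quantization error
  set Y : Fin n → Ω → ℝ := fun i ω => X N ω i - uniformQuantizer N Δ (X N ω i) with hY
  set g : Ω → ℝ := fun ω => (N:ℝ) ^ p + (N:ℝ) ^ p * M ω ^ m with hg
  have hgInt : Integrable g μ := (integrable_const _).add (hIntMm.const_mul _)
  have hgIntVal : ∫ ω, g ω ∂μ ≤ (1 + B) * (N:ℝ) ^ p := by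
    rw [hg, integral_add (integrable_const _) (hIntMm.const_mul _), integral_const,
      integral_const_mul]
    simp only [measure_univ, probReal_univ, ENNReal.toReal_one, smul_eq_mul, one_mul]
    nlinarith [hIntMmB, hNppos]
  have hPtwise : ∀ (i j : Fin n) ω, |Y i ω * Y j ω| ≤ g ω := by
    intro i j ω
    rw [abs_mul]
    by_cases h : M ω ≤ ((N:ℕ):ℝ) / 2 * Δ
    · have hi : |Y i ω| ≤ Δ / 2 := quantizer_err_le hΔpos ((hMle ω i).trans h)
      have hj : |Y j ω| ≤ Δ / 2 := quantizer_err_le hΔpos ((hMle ω j).trans h)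
      have : |Y i ω| * |Y j ω| ≤ (Δ/2) * (Δ/2) :=
        mul_le_mul hi hj (abs_nonneg _) (by linarith)
      rw [hΔ2, hNp] at this
      have h2 : 0 ≤ (N:ℝ) ^ p * M ω ^ m := mul_nonneg hNppos.le (hMm_nonneg ω)
      rw [hg]; dsimp only; linarith
    · push_neg at h
      have hMpos : 0 < M ω := lt_trans hc₀pos h
      have hΔhalf : Δ / 2 ≤ ((N:ℕ):ℝ) / 2 * Δ := by nlinarith
      have hk : ∀ k, |Y k ω| ≤ M ω := by
        intro k
        by_cases hov : |X N ω k| > ((N:ℕ):ℝ) / 2 * Δ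
        · rw [hY]; dsimp only; rw [quantizer_err_overflow hov]; exact hMle ω k
        · exact le_trans (quantizer_err_le hΔpos (not_lt.mp hov))
            (le_trans hΔhalf h.le)
      have h1 : |Y i ω| * |Y j ω| ≤ M ω * M ω :=
        mul_le_mul (hk i) (hk j) (abs_nonneg _) (hM0 ω)
      have h2 : M ω * M ω = M ω ^ (2 - m) * M ω ^ m := by
        rw [← Real.rpow_add hMpos, show (2 - m) + m = ((2:ℕ):ℝ) by push_cast; ring,
          Real.rpow_natCast, sq]
      have h3 : M ω ^ (2 - m) ≤ (((N:ℕ):ℝ) / 2 * Δ) ^ (2 - m) :=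
        Real.rpow_le_rpow_of_nonpos hc₀pos h.le (by linarith)
      have h4 : M ω * M ω ≤ (N:ℝ) ^ p * M ω ^ m := by
        rw [h2, ← hK]
        exact mul_le_mul_of_nonneg_right h3 (hMm_nonneg ω)
      rw [hg]; dsimp only
      linarith
  -- the per-entry bound
  have hEntry : ∀ i j : Fin n, |∫ ω, Y i ω * Y j ω ∂μ| ≤ (1 + B) * (N:ℝ) ^ p := by
    intro i j
    calc |∫ ω, Y i ω * Y j ω ∂μ| ≤ ∫ ω, |Y i ω * Y j ω| ∂μ := by
          rw [← Real.norm_eq_abs]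
          exact (norm_integral_le_integral_norm _).trans (le_of_eq (by simp only [Real.norm_eq_abs]))
      _ ≤ ∫ ω, g ω ∂μ :=
          integral_mono_of_nonneg (ae_of_all _ fun ω => abs_nonneg _) hgInt
            (ae_of_all _ fun ω => hPtwise i j ω)
      _ ≤ (1 + B) * (N:ℝ) ^ p := hgIntVal
  -- assembling the trace bound
  have htrace : (V * Matrix.of (fun i j => ∫ ω, Y i ω * Y j ω ∂μ)).trace
      = ∑ i : Fin n, ∑ j : Fin n, V i j * (∫ ω, Y j ω * Y i ω ∂μ) := by
    simp [Matrix.trace, Matrix.mul_apply, Matrix.diag]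
  calc (V * Matrix.of (fun i j => ∫ ω, Y i ω * Y j ω ∂μ)).trace
      = ∑ i : Fin n, ∑ j : Fin n, V i j * (∫ ω, Y j ω * Y i ω ∂μ) := htrace
    _ ≤ ∑ i : Fin n, ∑ j : Fin n, |V i j| * ((1 + B) * (N:ℝ) ^ p) := by
        refine Finset.sum_le_sum fun i _ => Finset.sum_le_sum fun j _ => ?_
        calc V i j * (∫ ω, Y j ω * Y i ω ∂μ)
            ≤ |V i j * (∫ ω, Y j ω * Y i ω ∂μ)| := le_abs_self _
          _ = |V i j| * |∫ ω, Y j ω * Y i ω ∂μ| := abs_mul _ _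
          _ ≤ |V i j| * ((1 + B) * (N:ℝ) ^ p) :=
              mul_le_mul_of_nonneg_left (hEntry j i) (abs_nonneg _)
    _ = S * ((1 + B) * (N:ℝ) ^ p) := by
        rw [hSdef, Finset.sum_mul]
        exact Finset.sum_congr rfl fun i _ => by rw [Finset.sum_mul]
    _ ≤ (S + 1) * (1 + B) * (N:ℝ) ^ p := by nlinarith
end

section
/- Let r > 1, β > 2, ε ∈ (0, β-2), ξ > 1 satisfy r ξ^{-β} < 1, and let w be nonnegative with E[w^β] < ∞. Suppose a nonnegative-integer-valued random variable τ satisfies P(τ ≥ k+1) ≤ k E[w^β] (c Δ (hξ^k - 1 - c'k)/k)^{-β} for all k ≥ 1, with constants c, c', h as above (h ∈ (1/ξ,1], c' < hξ-1, c > 0) and parameter Δ ≥ Δ₀ > 0. Then E[r^{τ-1}] ≤ 1 + M Δ^{-β} for a constant M independent of Δ; in particular sup_{Δ ≥ Δ₀} E[r^{τ-1}] < ∞ and E[r^{τ-1}] → 1 as Δ → ∞. -/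
open MeasureTheory Filter
open scoped ENNReal

lemma aux_growth {ξ h c' : ℝ} (hξ : 1 < ξ) (hh2 : h ≤ 1)
    (hhξ : 1 < h * ξ) (hc' : c' < h * ξ - 1) :
    ∃ a : ℝ, 0 < a ∧ ∀ k : ℕ, 1 ≤ k → a * ξ ^ k ≤ h * ξ ^ k - 1 - c' * k := by
  have hξ0 : 0 < ξ := lt_trans one_pos hξ
  obtain ⟨c'', hc''0, hc''lt, hck⟩ :
      ∃ c'', 0 ≤ c'' ∧ c'' < h * ξ - 1 ∧ ∀ k : ℕ, c' * k ≤ c'' * k :=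
    ⟨max c' 0, le_max_right _ _, max_lt hc' (by linarith),
      fun k => mul_le_mul_of_nonneg_right (le_max_left _ _) (Nat.cast_nonneg k)⟩
  have hδ0 : 0 < h * ξ - 1 - c'' := by linarith
  refine ⟨(h * ξ - 1 - c'') / ξ, div_pos hδ0 hξ0, ?_⟩
  have key : ∀ k : ℕ, 1 ≤ k →
      (h * ξ - 1 - c'') * (ξ ^ k - 1) ≤ (ξ - 1) * (h * ξ ^ k - 1 - c'' * k) := by
    intro k hk
    induction k, hk using Nat.le_induction with
    | base => simp only [pow_one, Nat.cast_one]; ring_nf; nlinarith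
    | succ n hn ih =>
      have hp : (1:ℝ) ≤ ξ ^ n := one_le_pow₀ hξ.le
      push_cast
      rw [pow_succ]
      push_cast at ih
      nlinarith [mul_nonneg (sub_nonneg.2 hp) (by linarith : (0:ℝ) ≤ 1 - h + c'')]
  intro k hk
  have hk' := key k hk
  have hp : ξ ≤ ξ ^ k := le_self_pow₀ hξ.le (by omega)
  have hp0 : (0:ℝ) < ξ ^ k := pow_pos hξ0 k
  have hck' := hck k
  rw [div_mul_eq_mul_div, div_le_iff₀ hξ0]
  have hξ1 : (0:ℝ) < ξ - 1 := by linarith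
  refine le_of_mul_le_mul_right ?_ hξ1
  nlinarith [mul_le_mul_of_nonneg_left hk' hξ0.le,
    mul_le_mul_of_nonneg_left hp hδ0.le,
    mul_le_mul_of_nonneg_left hck' (mul_nonneg hξ0.le hξ1.le)]

/-- Let `r > 1`, `β > 2`, `ε ∈ (0, β-2)`, `ξ > 1` with `r ξ^{-β} < 1`, and `w ≥ 0`
with `E[w^β] < ∞`.  If for each `Δ ≥ Δ₀ > 0` a return time `τ_Δ` satisfies the
tail bound `P(τ_Δ ≥ k+1) ≤ k E[w^β] (cΔ(hξ^k - 1 - c'k)/k)^{-β}` for all `k ≥ 1`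
(with `h ∈ (1/ξ, 1]`, `0 < c`, `c' < hξ - 1`), then `E[r^{τ_Δ - 1}] ≤ 1 + M Δ^{-β}`
for a constant `M` independent of `Δ`; in particular the expectations are
uniformly bounded over `Δ ≥ Δ₀` and tend to `1` as `Δ → ∞`. -/
theorem return_time_exponential_moment {Ω : Type*} [MeasurableSpace Ω]
    (μ : Measure Ω) [IsProbabilityMeasure μ]
    (r β ε ξ h c c' Δ₀ : ℝ) (hr : 1 < r) (hβ : 2 < β) (hε : 0 < ε ∧ ε < β - 2)
    (hξ : 1 < ξ) (hrξ : r * ξ ^ (-β) < 1)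
    (hh1 : 1 / ξ < h) (hh2 : h ≤ 1) (hc : 0 < c) (hc' : c' < h * ξ - 1)
    (hΔ₀ : 0 < Δ₀)
    (w : Ω → ℝ) (hwm : Measurable w) (hwnn : ∀ ω, 0 ≤ w ω)
    (hint : Integrable (fun ω => w ω ^ β) μ)
    (τ : ℝ → Ω → ℕ)
    (htail : ∀ Δ, Δ₀ ≤ Δ → ∀ k : ℕ, 1 ≤ k →
      μ {ω | k + 1 ≤ τ Δ ω} ≤ ENNReal.ofReal
        ((k : ℝ) * (∫ ω, w ω ^ β ∂μ) *
          (c * Δ * (h * ξ ^ (k : ℝ) - 1 - c' * k) / k) ^ (-β))) :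
    (∃ M : ℝ, 0 ≤ M ∧ ∀ Δ, Δ₀ ≤ Δ →
      ∫⁻ ω, ENNReal.ofReal (r ^ (τ Δ ω - 1)) ∂μ ≤
        ENNReal.ofReal (1 + M * Δ ^ (-β))) ∧
    (⨆ Δ ∈ Set.Ici Δ₀, ∫⁻ ω, ENNReal.ofReal (r ^ (τ Δ ω - 1)) ∂μ) < ⊤ ∧
    Tendsto (fun Δ : ℝ => ∫⁻ ω, ENNReal.ofReal (r ^ (τ Δ ω - 1)) ∂μ)
      atTop (nhds 1) := by
  have hr0 : (0:ℝ) < r := lt_trans one_pos hr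
  have hξ0 : (0:ℝ) < ξ := lt_trans one_pos hξ
  have hβ0 : (0:ℝ) < β := by linarith
  have hhξ : 1 < h * ξ := by rw [div_lt_iff₀ hξ0] at hh1; linarith
  obtain ⟨a, ha0, ha⟩ := aux_growth hξ hh2 hhξ hc'
  set E := ∫ ω, w ω ^ β ∂μ with hEdef
  have hE0 : 0 ≤ E := integral_nonneg fun ω => Real.rpow_nonneg (hwnn ω) β
  set q := r * ξ ^ (-β) with hqdef
  have hq0 : 0 ≤ q := mul_nonneg hr0.le (Real.rpow_nonneg hξ0.le _)
  set n := ⌈β⌉₊ + 2 with hndef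
  have hn1β : 1 + β ≤ (n : ℝ) := by
    have := Nat.le_ceil β
    rw [hndef]; push_cast; linarith
  have hsum : Summable (fun j : ℕ => ((j:ℝ)+1) ^ n * q ^ (j+1)) := by
    have h1 : Summable (fun k : ℕ => (k:ℝ) ^ n * q ^ k) :=
      summable_pow_mul_geometric_of_norm_lt_one n
        (by rwa [Real.norm_eq_abs, abs_of_nonneg hq0])
    have h2 := (summable_nat_add_iff 1).2 h1
    refine h2.congr fun j => by push_cast; ring
  set S := ∑' j : ℕ, ((j:ℝ)+1) ^ n * q ^ (j+1) with hSdef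
  have hS0 : 0 ≤ S := tsum_nonneg fun j =>
    mul_nonneg (pow_nonneg (by positivity) _) (pow_nonneg hq0 _)
  set K := E * c ^ (-β) * a ^ (-β) with hKdef
  have hK0 : 0 ≤ K := mul_nonneg (mul_nonneg hE0 (Real.rpow_nonneg hc.le _))
    (Real.rpow_nonneg ha0.le _)
  set M := K * S with hMdef
  have hM0 : 0 ≤ M := mul_nonneg hK0 hS0
  have main : ∀ Δ, Δ₀ ≤ Δ →
      ∫⁻ ω, ENNReal.ofReal (r ^ (τ Δ ω - 1)) ∂μ ≤
        ENNReal.ofReal (1 + M * Δ ^ (-β)) := by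
    intro Δ hΔ
    have hΔ0 : 0 < Δ := lt_of_lt_of_le hΔ₀ hΔ
    set T : ℕ → Set Ω := fun j => toMeasurable μ {ω | j + 1 + 1 ≤ τ Δ ω} with hTdef
    have hTm : ∀ j, MeasurableSet (T j) := fun j => measurableSet_toMeasurable μ _
    -- pointwise bound
    have hpt : ∀ ω, ENNReal.ofReal (r ^ (τ Δ ω - 1)) ≤
        1 + ∑' j : ℕ, ENNReal.ofReal (r ^ (j+1)) * (T j).indicator 1 ω := by
      intro ω
      rcases le_or_gt (τ Δ ω) 1 with hm | hm
      · have h0 : τ Δ ω - 1 = 0 := by omega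
        rw [h0, pow_zero, ENNReal.ofReal_one]
        exact le_self_add
      · set m := τ Δ ω with hmdef
        have hmem : ω ∈ T (m - 2) := subset_toMeasurable μ _
          (by simp only [Set.mem_setOf_eq]; omega)
        have heq : ENNReal.ofReal (r ^ (m - 1)) =
            ENNReal.ofReal (r ^ ((m - 2) + 1)) * (T (m - 2)).indicator 1 ω := by
          rw [Set.indicator_of_mem hmem, Pi.one_apply, mul_one]
          congr 2
          omega
        rw [heq]
        exact le_add_left (ENNReal.le_tsum (m - 2))
    -- integral bound
    have step1 : ∫⁻ ω, ENNReal.ofReal (r ^ (τ Δ ω - 1)) ∂μ ≤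
        1 + ∑' j : ℕ, ENNReal.ofReal (r ^ (j+1)) * μ (T j) := by
      have hmeas : ∀ j : ℕ, Measurable fun ω =>
          ENNReal.ofReal (r ^ (j+1)) * (T j).indicator (1 : Ω → ℝ≥0∞) ω :=
        fun j => (measurable_one.indicator (hTm j)).const_mul _
      calc ∫⁻ ω, ENNReal.ofReal (r ^ (τ Δ ω - 1)) ∂μ
          ≤ ∫⁻ ω, (1 + ∑' j : ℕ, ENNReal.ofReal (r ^ (j+1)) * (T j).indicator 1 ω) ∂μ :=
            lintegral_mono hpt
        _ = ∫⁻ _, (1:ℝ≥0∞) ∂μ +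
            ∫⁻ ω, ∑' j : ℕ, ENNReal.ofReal (r ^ (j+1)) * (T j).indicator 1 ω ∂μ :=
            lintegral_add_left measurable_const _
        _ = 1 + ∑' j : ℕ, ENNReal.ofReal (r ^ (j+1)) * μ (T j) := by
            rw [lintegral_const, measure_univ, mul_one,
              lintegral_tsum fun j => (hmeas j).aemeasurable]
            congr 1
            refine tsum_congr fun j => ?_
            rw [lintegral_const_mul _ (measurable_one.indicator (hTm j)),
              lintegral_indicator_one (hTm j)]
    -- per-term real bound
    have hterm : ∀ j : ℕ,
        r ^ (j+1) * (((j+1 : ℕ) : ℝ) * E *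
          (c * Δ * (h * ξ ^ (((j+1 : ℕ)) : ℝ) - 1 - c' * ((j+1 : ℕ) : ℝ)) /
            ((j+1 : ℕ) : ℝ)) ^ (-β))
          ≤ K * (((j:ℝ)+1) ^ n * q ^ (j+1)) * Δ ^ (-β) := by
      intro j
      set k : ℕ := j + 1 with hkdef
      have hkR0 : (0:ℝ) < (k : ℝ) := by positivity
      have hkR1 : (1:ℝ) ≤ (k : ℝ) := by exact_mod_cast Nat.one_le_iff_ne_zero.2 (by omega)
      have hrp : ξ ^ ((k : ℕ) : ℝ) = ξ ^ (k : ℕ) := Real.rpow_natCast ξ k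
      set X := h * ξ ^ ((k : ℕ) : ℝ) - 1 - c' * ((k:ℕ) : ℝ) with hXdef
      have hX : a * ξ ^ (k:ℕ) ≤ X := by rw [hXdef, hrp]; exact ha k (by omega)
      have haξ0 : (0:ℝ) < a * ξ ^ (k:ℕ) := by positivity
      have hX0 : (0:ℝ) < X := lt_of_lt_of_le haξ0 hX
      have e1 : (c * Δ * X / (k:ℝ)) ^ (-β) =
          c ^ (-β) * Δ ^ (-β) * X ^ (-β) * ((k:ℝ)) ^ β := by
        rw [div_eq_mul_inv, Real.mul_rpow (by positivity) (by positivity),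
          Real.mul_rpow (by positivity) hX0.le,
          Real.mul_rpow hc.le hΔ0.le,
          Real.inv_rpow hkR0.le, Real.rpow_neg hkR0.le, inv_inv]
      have e2 : X ^ (-β) ≤ a ^ (-β) * (ξ ^ (-β)) ^ (k:ℕ) := by
        have h1 : X ^ (-β) ≤ (a * ξ ^ (k:ℕ)) ^ (-β) :=
          Real.rpow_le_rpow_of_nonpos haξ0 hX (by linarith)
        have h2 : (a * ξ ^ (k:ℕ)) ^ (-β) = a ^ (-β) * (ξ ^ (-β)) ^ (k:ℕ) := by
          rw [Real.mul_rpow ha0.le (by positivity), ← Real.rpow_natCast ξ k,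
            ← Real.rpow_mul hξ0.le,
            show ((k:ℕ):ℝ) * (-β) = (-β) * ((k:ℕ):ℝ) from mul_comm _ _,
            Real.rpow_mul hξ0.le, Real.rpow_natCast]
        exact h1.trans_eq h2
      have e3 : (k:ℝ) * (k:ℝ) ^ β ≤ ((k:ℝ)) ^ (n:ℕ) := by
        calc (k:ℝ) * (k:ℝ) ^ β = (k:ℝ) ^ (1 + β) := by
              rw [Real.rpow_add hkR0, Real.rpow_one]
          _ ≤ (k:ℝ) ^ ((n:ℕ):ℝ) := Real.rpow_le_rpow_of_exponent_le hkR1 hn1β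
          _ = (k:ℝ) ^ (n:ℕ) := Real.rpow_natCast _ n
      have eAB : X ^ (-β) * ((k:ℝ) * (k:ℝ) ^ β) ≤
          (a ^ (-β) * (ξ ^ (-β)) ^ (k:ℕ)) * (k:ℝ) ^ (n:ℕ) :=
        mul_le_mul e2 e3 (by positivity) (by positivity)
      have emain : E * c ^ (-β) * (X ^ (-β) * ((k:ℝ) * (k:ℝ) ^ β)) * (r ^ (k:ℕ) * Δ ^ (-β)) ≤
          E * c ^ (-β) * ((a ^ (-β) * (ξ ^ (-β)) ^ (k:ℕ)) * (k:ℝ) ^ (n:ℕ)) *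
            (r ^ (k:ℕ) * Δ ^ (-β)) := by
        refine mul_le_mul_of_nonneg_right (mul_le_mul_of_nonneg_left eAB ?_) (by positivity)
        exact mul_nonneg hE0 (Real.rpow_nonneg hc.le _)
      calc r ^ (j+1) * (((k:ℕ):ℝ) * E * (c * Δ * X / ((k:ℕ):ℝ)) ^ (-β))
          = E * c ^ (-β) * (X ^ (-β) * ((k:ℝ) * (k:ℝ) ^ β)) * (r ^ (k:ℕ) * Δ ^ (-β)) := by
            rw [e1]; ring
        _ ≤ E * c ^ (-β) * ((a ^ (-β) * (ξ ^ (-β)) ^ (k:ℕ)) * (k:ℝ) ^ (n:ℕ)) *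
            (r ^ (k:ℕ) * Δ ^ (-β)) := emain
        _ = K * (((j:ℝ)+1) ^ n * q ^ (j+1)) * Δ ^ (-β) := by
            rw [hKdef, hqdef, mul_pow]
            have : ((k:ℕ):ℝ) = (j:ℝ) + 1 := by rw [hkdef]; push_cast; ring
            rw [this]
            ring
    -- sum bound
    have hsum2 : ∑' j : ℕ, ENNReal.ofReal (r ^ (j+1)) * μ (T j) ≤
        ENNReal.ofReal (M * Δ ^ (-β)) := by
      have hb : ∀ j : ℕ, ENNReal.ofReal (r ^ (j+1)) * μ (T j) ≤
          ENNReal.ofReal (K * (((j:ℝ)+1) ^ n * q ^ (j+1)) * Δ ^ (-β)) := by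
        intro j
        have hμ : μ (T j) = μ {ω | j + 1 + 1 ≤ τ Δ ω} := measure_toMeasurable _
        rw [hμ]
        refine le_trans (mul_le_mul_right (htail Δ hΔ (j+1) (by omega)) _) ?_
        rw [← ENNReal.ofReal_mul (by positivity)]
        exact ENNReal.ofReal_le_ofReal (hterm j)
      calc ∑' j : ℕ, ENNReal.ofReal (r ^ (j+1)) * μ (T j)
          ≤ ∑' j : ℕ, ENNReal.ofReal (K * (((j:ℝ)+1) ^ n * q ^ (j+1)) * Δ ^ (-β)) :=
            ENNReal.tsum_le_tsum hb
        _ = ENNReal.ofReal (∑' j : ℕ, K * (((j:ℝ)+1) ^ n * q ^ (j+1)) * Δ ^ (-β)) := by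
            refine (ENNReal.ofReal_tsum_of_nonneg (fun j => ?_) ?_).symm
            · have := Real.rpow_nonneg hΔ0.le (-β)
              have h1 : 0 ≤ ((j:ℝ)+1) ^ n * q ^ (j+1) :=
                mul_nonneg (pow_nonneg (by positivity) _) (pow_nonneg hq0 _)
              exact mul_nonneg (mul_nonneg hK0 h1) this
            · exact (hsum.mul_left (K * Δ ^ (-β))).congr fun j => by ring
        _ = ENNReal.ofReal (M * Δ ^ (-β)) := by
            congr 1
            have : ∀ j : ℕ, K * (((j:ℝ)+1) ^ n * q ^ (j+1)) * Δ ^ (-β) =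
                (K * Δ ^ (-β)) * (((j:ℝ)+1) ^ n * q ^ (j+1)) := fun j => by ring
            rw [tsum_congr this, tsum_mul_left, hMdef, ← hSdef]
            ring
    calc ∫⁻ ω, ENNReal.ofReal (r ^ (τ Δ ω - 1)) ∂μ
        ≤ 1 + ∑' j : ℕ, ENNReal.ofReal (r ^ (j+1)) * μ (T j) := step1
      _ ≤ 1 + ENNReal.ofReal (M * Δ ^ (-β)) := add_le_add_right hsum2 _
      _ = ENNReal.ofReal (1 + M * Δ ^ (-β)) := by
          rw [ENNReal.ofReal_add zero_le_one
            (mul_nonneg hM0 (Real.rpow_nonneg hΔ0.le _)), ENNReal.ofReal_one]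
  refine ⟨⟨M, hM0, main⟩, ?_, ?_⟩
  · have hbd : (⨆ Δ ∈ Set.Ici Δ₀, ∫⁻ ω, ENNReal.ofReal (r ^ (τ Δ ω - 1)) ∂μ) ≤
        ENNReal.ofReal (1 + M * Δ₀ ^ (-β)) := by
      refine iSup₂_le fun Δ hΔ => (main Δ hΔ).trans (ENNReal.ofReal_le_ofReal ?_)
      have h1 : Δ ^ (-β) ≤ Δ₀ ^ (-β) :=
        Real.rpow_le_rpow_of_nonpos hΔ₀ hΔ (by linarith)
      nlinarith
    exact hbd.trans_lt ENNReal.ofReal_lt_top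
  · have hlow : ∀ Δ : ℝ, (1:ℝ≥0∞) ≤ ∫⁻ ω, ENNReal.ofReal (r ^ (τ Δ ω - 1)) ∂μ := by
      intro Δ
      have h1 : ∀ ω, (1:ℝ≥0∞) ≤ ENNReal.ofReal (r ^ (τ Δ ω - 1)) := fun ω => by
        rw [← ENNReal.ofReal_one]
        exact ENNReal.ofReal_le_ofReal (one_le_pow₀ hr.le)
      calc (1:ℝ≥0∞) = ∫⁻ _, (1:ℝ≥0∞) ∂μ := by simp
        _ ≤ ∫⁻ ω, ENNReal.ofReal (r ^ (τ Δ ω - 1)) ∂μ := lintegral_mono h1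
    have hup : Tendsto (fun Δ : ℝ => ENNReal.ofReal (1 + M * Δ ^ (-β))) atTop (nhds 1) := by
      have h1 : Tendsto (fun Δ : ℝ => 1 + M * Δ ^ (-β)) atTop (nhds 1) := by
        have h2 := (tendsto_rpow_neg_atTop hβ0).const_mul M
        have := tendsto_const_nhds (x := (1:ℝ)) (f := atTop (α := ℝ)) |>.add h2
        simpa using this
      have := ENNReal.tendsto_ofReal h1
      simpa [ENNReal.ofReal_one] using this
    refine tendsto_of_tendsto_of_tendsto_of_le_of_le' tendsto_const_nhds hup ?_ ?_
    · exact Eventually.of_forall hlow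
    · exact (eventually_ge_atTop Δ₀).mono fun Δ hΔ => main Δ hΔ
end
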